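/- Let B be an n×d matrix of rank d, let R be symmetric positive semidefinite d×d with kernel K of dimension q ≥ 1, and suppose X is an n×q matrix with column span equal to {Bv : v ∈ K} and full column rank. Let H = X(XᵀX)^{−1}Xᵀ. Then for every τ² > 0 and τ²_poly > 0 the matrix R/τ² + BᵀHB/(nτ²_poly) is symmetric positive definite; hence the proper conditional O-splines prior N_d(0, (R/τ² + BᵀHB/(nτ²_poly))^{−1}) is a well-defined nondegenerate Gaussian distribution. -/

import Mathlib

open Matrix

lemma dps_nonneg {k : ℕ} (v : Fin k → ℝ) : 0 ≤ v ⬝ᵥ v :=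
  Finset.sum_nonneg fun _ _ => mul_self_nonneg _

lemma herm_smul {k : ℕ} (c : ℝ) {M : Matrix (Fin k) (Fin k) ℝ} (h : M.IsHermitian) :
    (c • M).IsHermitian := by
  unfold Matrix.IsHermitian at *
  rw [conjTranspose_smul, h, star_trivial]

lemma inj_of_rank_eq {n d : ℕ} (B : Matrix (Fin n) (Fin d) ℝ) (hB : B.rank = d) :
    Function.Injective B.mulVecLin := by
  rw [← LinearMap.ker_eq_bot]
  have h := LinearMap.finrank_range_add_finrank_ker B.mulVecLin
  rw [Matrix.rank] at hB
  have : Module.finrank ℝ (LinearMap.ker B.mulVecLin) = 0 := by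
    have hd : Module.finrank ℝ (Fin d → ℝ) = d := by simp
    omega
  exact Submodule.finrank_eq_zero.mp this

/-- Propriety of the proper conditional O-splines prior: if `B` has rank `d`, `R`
is symmetric positive semidefinite with kernel `K` of dimension `q ≥ 1`, and `X`
has full column rank `q` with column span `{Bv : v ∈ K}`, then for all
`τ², τ²_poly > 0` the precision matrix `R/τ² + BᵀHB/(nτ²_poly)` with
`H = X(XᵀX)⁻¹Xᵀ` is positive definite. -/
theorem stmt_17 (n d q : ℕ) (hq : 1 ≤ q)
    (B : Matrix (Fin n) (Fin d) ℝ) (hB : B.rank = d)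
    (R : Matrix (Fin d) (Fin d) ℝ) (hR : R.PosSemidef)
    (hker : Module.finrank ℝ (LinearMap.ker R.mulVecLin) = q)
    (X : Matrix (Fin n) (Fin q) ℝ) (hX : X.rank = q)
    (hspan : Submodule.span ℝ (Set.range fun j => fun i => X i j)
      = Submodule.map B.mulVecLin (LinearMap.ker R.mulVecLin))
    (τ2 τp : ℝ) (hτ : 0 < τ2) (hτp : 0 < τp) :
    let H : Matrix (Fin n) (Fin n) ℝ := X * (Xᵀ * X)⁻¹ * Xᵀ
    ((1 / τ2) • R + (1 / ((n : ℝ) * τp)) • (Bᵀ * H * B)).PosDef := by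
  intro H
  -- n > 0 : since X has rank q ≥ 1
  have hn : 0 < n := by
    rcases Nat.eq_zero_or_pos n with h0 | h
    · exfalso
      subst h0
      have : X.rank ≤ 0 := by
        simpa using X.rank_le_card_height
      omega
    · exact h
  have hXinj : Function.Injective X.mulVecLin := inj_of_rank_eq X hX
  have hBinj : Function.Injective B.mulVecLin := inj_of_rank_eq B hB
  -- XᵀX is positive definite
  have hXtX : (Xᵀ * X).PosDef := by
    refine posDef_iff_dotProduct_mulVec.mpr ⟨?_, fun v hv => ?_⟩
    · unfold Matrix.IsHermitian
      rw [conjTranspose_eq_transpose_of_trivial, transpose_mul, transpose_transpose]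
    · have hXv : X *ᵥ v ≠ 0 := by
        intro h
        apply hv
        exact hXinj (by simpa [Matrix.mulVecLin_apply] using h)
      have : star v ⬝ᵥ (Xᵀ * X) *ᵥ v = (X *ᵥ v) ⬝ᵥ (X *ᵥ v) := by
        rw [← mulVec_mulVec, dotProduct_mulVec, vecMul_transpose]
        simp [star_trivial]
      rw [this]
      have := dotProduct_self_eq_zero (v := X *ᵥ v)
      have hnn : 0 ≤ (X *ᵥ v) ⬝ᵥ (X *ᵥ v) := dps_nonneg _
      rcases lt_or_eq_of_le hnn with h | h
      · exact h
      · exact absurd (dotProduct_self_eq_zero.mp h.symm) hXv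
  have hdet : IsUnit (Xᵀ * X).det := isUnit_iff_isUnit_det _ |>.mp hXtX.isUnit
  have hHX : H * X = X := by
    show X * (Xᵀ * X)⁻¹ * Xᵀ * X = X
    rw [Matrix.mul_assoc (X * (Xᵀ * X)⁻¹), Matrix.mul_assoc X, Matrix.nonsing_inv_mul _ hdet,
      Matrix.mul_one]
  -- H is positive semidefinite, hence BᵀHB is
  have hHps : H.PosSemidef := by
    have hinv : ((Xᵀ * X)⁻¹).PosDef := hXtX.inv
    have h := hinv.posSemidef.mul_mul_conjTranspose_same X
    have hHeq : H = X * ((Xᵀ * X)⁻¹ * Xᵀ) := Matrix.mul_assoc _ _ _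
    rw [hHeq]
    simpa [conjTranspose_eq_transpose_of_trivial, Matrix.mul_assoc] using h
  have hBHB : (Bᵀ * H * B).PosSemidef := by
    have := hHps.mul_mul_conjTranspose_same Bᵀ
    simpa [conjTranspose_eq_transpose_of_trivial] using this
  have hc1 : (0:ℝ) < 1 / τ2 := by positivity
  have hc2 : (0:ℝ) < 1 / ((n : ℝ) * τp) := by positivity
  refine posDef_iff_dotProduct_mulVec.mpr ⟨((herm_smul _ hR.1).add (herm_smul _ hBHB.1)), fun x hx => ?_⟩
  rw [add_mulVec, dotProduct_add, smul_mulVec, smul_mulVec,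
    dotProduct_smul, dotProduct_smul]
  have hR0 : 0 ≤ star x ⬝ᵥ R *ᵥ x := hR.dotProduct_mulVec_nonneg x
  have hB0 : 0 ≤ star x ⬝ᵥ (Bᵀ * H * B) *ᵥ x := hBHB.dotProduct_mulVec_nonneg x
  rcases lt_or_eq_of_le hR0 with hpos | heq
  · have : 0 < (1 / τ2) • (star x ⬝ᵥ R *ᵥ x) := by
      simpa [smul_eq_mul] using mul_pos hc1 hpos
    have h2 : 0 ≤ (1 / ((n : ℝ) * τp)) • (star x ⬝ᵥ (Bᵀ * H * B) *ᵥ x) := by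
      simpa [smul_eq_mul] using mul_nonneg hc2.le hB0
    linarith [this, h2]
  · -- x is in the kernel of R
    have hRx : R *ᵥ x = 0 := (hR.dotProduct_mulVec_zero_iff x).mp heq.symm
    have hmem : B *ᵥ x ∈ Submodule.map B.mulVecLin (LinearMap.ker R.mulVecLin) :=
      ⟨x, by simpa [Matrix.mulVecLin_apply] using hRx, rfl⟩
    rw [← hspan] at hmem
    have hrange : Submodule.span ℝ (Set.range fun j => fun i => X i j)
        = LinearMap.range X.mulVecLin := by
      rw [Matrix.range_mulVecLin]
      rfl
    rw [hrange] at hmem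
    obtain ⟨w, hw⟩ := hmem
    have hw' : X *ᵥ w = B *ᵥ x := hw
    have hBx : B *ᵥ x ≠ 0 := by
      intro h
      apply hx
      exact hBinj (by simpa [Matrix.mulVecLin_apply] using h)
    have hquad : star x ⬝ᵥ (Bᵀ * H * B) *ᵥ x = (B *ᵥ x) ⬝ᵥ (B *ᵥ x) := by
      have h1 : (Bᵀ * H * B) *ᵥ x = Bᵀ *ᵥ (H *ᵥ (B *ᵥ x)) := by
        rw [← mulVec_mulVec, ← mulVec_mulVec]
      have h2 : H *ᵥ (B *ᵥ x) = B *ᵥ x := by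
        rw [← hw', mulVec_mulVec, hHX]
      rw [h1, h2, dotProduct_mulVec, vecMul_transpose]
      simp [star_trivial]
    have hBpos : 0 < (B *ᵥ x) ⬝ᵥ (B *ᵥ x) := by
      rcases lt_or_eq_of_le (dps_nonneg (B *ᵥ x)) with h | h
      · exact h
      · exact absurd (dotProduct_self_eq_zero.mp h.symm) hBx
    rw [← heq, hquad]
    simpa [smul_eq_mul] using mul_pos hc2 hBpos
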